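/- Let (R, m) be a commutative local ring with m = m², and let x ∈ m be nonzero with m ≠ (x) + Ann(x). Then there exists a sequence x₁, x₂, ... ∈ m such that for every n, the product x₁⋯xₙ ∉ (x) + Ann(x). -/

import Mathlib

/-- If `(R, m)` is local with `m = m²` and `x ∈ m` is nonzero with
`m ≠ (x) + Ann(x)`, then there is a sequence `x₁, x₂, … ∈ m` such that for every
`n`, the product `x₁⋯xₙ ∉ (x) + Ann(x)`. -/
theorem stmt10 {R : Type*} [CommRing R] [IsLocalRing R]
    (h2 : IsLocalRing.maximalIdeal R = (IsLocalRing.maximalIdeal R) ^ 2)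
    (x : R) (hx : x ∈ IsLocalRing.maximalIdeal R) (hx0 : x ≠ 0)
    (hxm : IsLocalRing.maximalIdeal R ≠ Ideal.span {x} + (Ideal.span {x}).annihilator) :
    ∃ xs : ℕ → R, (∀ i, xs i ∈ IsLocalRing.maximalIdeal R) ∧
      ∀ n : ℕ, (∏ i ∈ Finset.range (n + 1), xs i) ∉
        Ideal.span {x} + (Ideal.span {x}).annihilator := by
  classical
  set m := IsLocalRing.maximalIdeal R with hm
  set I := Ideal.span {x} + (Ideal.span {x}).annihilator with hI
  -- I is proper, hence ≤ m
  have hIm : I ≤ m := by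
    apply IsLocalRing.le_maximalIdeal
    intro hItop
    have h1 : (1 : R) ∈ I := hItop ▸ Submodule.mem_top
    obtain ⟨u, hu, v, hv, huv⟩ := Submodule.mem_sup.mp h1
    have hvx : x * v = 0 := by
      have := Submodule.mem_annihilator.mp hv x (Ideal.mem_span_singleton_self x)
      have : v * x = 0 := by simpa [smul_eq_mul] using this
      linear_combination this
    have hum : u ∈ m := (Ideal.span_singleton_le_iff_mem m).mpr hx hu
    have hunit : IsUnit (1 - u) :=
      IsLocalRing.isUnit_one_sub_self_of_mem_nonunits u hum
    have hx1 : x * (1 - u) = 0 := by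
      have hxx : x * (u + v) = x := by rw [huv, mul_one]
      linear_combination hvx - hxx
    obtain ⟨w, hw⟩ := hunit.exists_right_inv
    apply hx0
    calc x = x * ((1 - u) * w) := by rw [hw, mul_one]
    _ = (x * (1 - u)) * w := by ring
    _ = 0 := by rw [hx1, zero_mul]
  -- pick y₀ ∈ m \ I
  obtain ⟨y₀, hy₀m, hy₀I⟩ := SetLike.exists_of_lt (lt_of_le_of_ne hIm (Ne.symm hxm))
  -- key lemma
  have key : ∀ p y : R, y ∈ m → p * y ∉ I → ∃ a b, a ∈ m ∧ b ∈ m ∧ p * a * b ∉ I := by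
    intro p y hy hpy
    by_contra hcon
    push_neg at hcon
    apply hpy
    have hy2 : y ∈ m * m := by rw [← pow_two, ← h2]; exact hy
    refine Submodule.mul_induction_on (C := fun z => p * z ∈ I) hy2 ?_ ?_
    · intro a ha b hb
      have := hcon a b ha hb
      rwa [mul_assoc] at this
    · intro r s hr hs
      rw [mul_add]; exact I.add_mem hr hs
  choose f g hfm hgm hfg using key
  -- state: (last xᵢ, partial product p, next y) with p * y ∉ I
  let T := {t : R × R × R // t.1 ∈ m ∧ t.2.2 ∈ m ∧ t.2.1 * t.2.2 ∉ I}
  have hy₀I' : (1 : R) * y₀ ∉ I := by rwa [one_mul]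
  let a₀ := f 1 y₀ hy₀m hy₀I'
  let init : T := ⟨(a₀, a₀, g 1 y₀ hy₀m hy₀I'),
    hfm 1 y₀ hy₀m hy₀I', hgm 1 y₀ hy₀m hy₀I', by
      have := hfg 1 y₀ hy₀m hy₀I'
      rwa [one_mul] at this⟩
  let step : T → T := fun t =>
    ⟨(f t.1.2.1 t.1.2.2 t.2.2.1 t.2.2.2,
      t.1.2.1 * f t.1.2.1 t.1.2.2 t.2.2.1 t.2.2.2,
      g t.1.2.1 t.1.2.2 t.2.2.1 t.2.2.2),
     hfm _ _ _ _, hgm _ _ _ _, hfg _ _ _ _⟩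
  let seq : ℕ → T := fun n => step^[n] init
  refine ⟨fun n => (seq n).1.1, fun i => (seq i).2.1, ?_⟩
  have hseq : ∀ n, seq (n + 1) = step (seq n) := by
    intro n
    simp only [seq, Function.iterate_succ_apply']
  have hprod : ∀ n, (∏ i ∈ Finset.range (n + 1), (seq i).1.1) = (seq n).1.2.1 := by
    intro n
    induction n with
    | zero => simp [seq]; rfl
    | succ k ih =>
      rw [Finset.prod_range_succ, ih, hseq k]
  intro n hmem
  have ht := (seq n).2.2.2
  apply ht
  rw [← hprod n] at ht ⊢
  exact Ideal.mul_mem_right _ _ hmem
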